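/- With notation as in the Schenker decomposition: let H be block tridiagonal with blocks A_j, B_j, fix E, define D_j recursively by D₁ = A₁ - E, D_{j+1} = A_{j+1} - E - B_j^* D_j^{-1} B_j (all D_j invertible), and for a unit vector w define v_N = w and v_j = D_{j+1}^{-1}B_{j+1}⋯D_N^{-1}w / ‖D_{j+1}^{-1}B_{j+1}⋯D_N^{-1}w‖ for 1 ≤ j ≤ N-1 (assuming these vectors are nonzero). Fix j ∈ [2, N-1] and suppose ‖A_j‖_op ≤ 10 and ‖B_j‖_op ≤ 10. Then either ‖B_j^* D_j^{-1} B_j v_j‖ ≤ 100, or ‖B_{j-1}^* D_{j-1}^{-1} B_{j-1} v_{j-1}‖ ≤ 100 + |E|. -/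
import Mathlib

open Matrix

noncomputable def euclNorm {W : ℕ} (x : Fin W → ℝ) : ℝ :=
  Real.sqrt (∑ i, x i ^ 2)

lemma euclNorm_eq_norm {W : ℕ} (x : Fin W → ℝ) :
    euclNorm x = ‖(WithLp.equiv 2 (Fin W → ℝ)).symm x‖ := by
  simp [euclNorm, EuclideanSpace.norm_eq, Real.norm_eq_abs, sq_abs]

lemma euclNorm_nonneg {W : ℕ} (x : Fin W → ℝ) : 0 ≤ euclNorm x :=
  Real.sqrt_nonneg _

lemma euclNorm_smul {W : ℕ} (c : ℝ) (x : Fin W → ℝ) :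
    euclNorm (c • x) = |c| * euclNorm x := by
  rw [euclNorm_eq_norm, euclNorm_eq_norm]
  have : (WithLp.equiv 2 (Fin W → ℝ)).symm (c • x)
      = c • (WithLp.equiv 2 (Fin W → ℝ)).symm x := rfl
  rw [this, norm_smul, Real.norm_eq_abs]

lemma euclNorm_sub_sub {W : ℕ} (a b c : Fin W → ℝ) :
    euclNorm (a - b - c) ≤ euclNorm a + euclNorm b + euclNorm c := by
  simp only [euclNorm_eq_norm]
  have : (WithLp.equiv 2 (Fin W → ℝ)).symm (a - b - c)
      = (WithLp.equiv 2 (Fin W → ℝ)).symm a - (WithLp.equiv 2 (Fin W → ℝ)).symm b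
        - (WithLp.equiv 2 (Fin W → ℝ)).symm c := rfl
  rw [this]
  calc ‖_ - _ - _‖ ≤ ‖_ - _‖ + ‖(WithLp.equiv 2 (Fin W → ℝ)).symm c‖ := norm_sub_le _ _
    _ ≤ _ := by gcongr; exact norm_sub_le _ _

lemma euclNorm_sq {W : ℕ} (x : Fin W → ℝ) : euclNorm x ^ 2 = x ⬝ᵥ x := by
  rw [euclNorm, Real.sq_sqrt (by positivity)]
  simp [dotProduct, sq]

lemma dotProduct_le {W : ℕ} (x y : Fin W → ℝ) : x ⬝ᵥ y ≤ euclNorm x * euclNorm y := by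
  have h := real_inner_le_norm ((WithLp.equiv 2 (Fin W → ℝ)).symm x)
    ((WithLp.equiv 2 (Fin W → ℝ)).symm y)
  rw [← euclNorm_eq_norm, ← euclNorm_eq_norm] at h
  simpa [PiLp.inner_apply, RCLike.inner_apply, dotProduct, mul_comm] using h

lemma transpose_op_bound {W : ℕ} (A : Matrix (Fin W) (Fin W) ℝ)
    (hA : ∀ x : Fin W → ℝ, euclNorm (A.mulVec x) ≤ 10 * euclNorm x)
    (y : Fin W → ℝ) : euclNorm (Aᵀ.mulVec y) ≤ 10 * euclNorm y := by
  set z := Aᵀ.mulVec y with hz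
  rcases eq_or_lt_of_le (euclNorm_nonneg z) with h0 | h0
  · rw [← h0]; have := euclNorm_nonneg y; linarith
  have key : euclNorm z ^ 2 ≤ euclNorm y * (10 * euclNorm z) := by
    rw [euclNorm_sq]
    have h1 : z ⬝ᵥ z = y ⬝ᵥ A.mulVec z := by
      nth_rewrite 1 [hz]
      rw [mulVec_transpose, ← dotProduct_mulVec]
    rw [h1]
    calc y ⬝ᵥ A.mulVec z ≤ euclNorm y * euclNorm (A.mulVec z) := dotProduct_le _ _
      _ ≤ euclNorm y * (10 * euclNorm z) := by
          have := hA z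
          have := euclNorm_nonneg y
          nlinarith
  nlinarith [euclNorm_nonneg y]

theorem either_or_bound
    (W : ℕ) (E : ℝ)
    (Aj Bj Dj Bprev Dprev : Matrix (Fin W) (Fin W) ℝ)
    (u vprev : Fin W → ℝ)
    (hu : euclNorm u = 1)
    (hAop : ∀ x : Fin W → ℝ, euclNorm (Aj.mulVec x) ≤ 10 * euclNorm x)
    (hBop : ∀ x : Fin W → ℝ, euclNorm (Bj.mulVec x) ≤ 10 * euclNorm x)
    (hDjinv : IsUnit Dj)
    (hDprevinv : IsUnit Dprev)
    (hrec : Dj = Aj - E • (1 : Matrix (Fin W) (Fin W) ℝ) - Bprevᵀ * Dprev⁻¹ * Bprev)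
    (hne : Dj⁻¹.mulVec (Bj.mulVec u) ≠ 0)
    (hvprev : vprev =
      (euclNorm (Dj⁻¹.mulVec (Bj.mulVec u)))⁻¹ • Dj⁻¹.mulVec (Bj.mulVec u)) :
    euclNorm ((Bjᵀ * Dj⁻¹ * Bj).mulVec u) ≤ 100 ∨
      euclNorm ((Bprevᵀ * Dprev⁻¹ * Bprev).mulVec vprev) ≤ 100 + |E| := by
  by_cases h : euclNorm ((Bjᵀ * Dj⁻¹ * Bj).mulVec u) ≤ 100
  · exact Or.inl h
  right
  push_neg at h
  set y := Dj⁻¹.mulVec (Bj.mulVec u) with hy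
  set n := euclNorm y with hn
  -- n > 0
  have hnpos : 0 < n := by
    rw [hn, euclNorm_eq_norm]
    refine norm_pos_iff.mpr (fun hz => hne ?_)
    simpa using congrArg (WithLp.equiv 2 (Fin W → ℝ)) hz
  -- 100 < ‖Bjᵀ y‖ ≤ 10 n, so n ≥ 10
  have hrw : (Bjᵀ * Dj⁻¹ * Bj).mulVec u = Bjᵀ.mulVec y := by
    rw [hy, ← mulVec_mulVec, ← mulVec_mulVec]
  have h10 : 10 ≤ n := by
    have h1 : euclNorm (Bjᵀ.mulVec y) ≤ 10 * n := transpose_op_bound Bj hBop y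
    rw [hrw] at h
    linarith
  -- Dj y = Bj u
  have hDjy : Dj.mulVec y = Bj.mulVec u := by
    rw [hy, mulVec_mulVec, Matrix.mul_nonsing_inv _ ((Matrix.isUnit_iff_isUnit_det Dj).mp hDjinv),
      one_mulVec]
  have hM : Bprevᵀ * Dprev⁻¹ * Bprev = Aj - E • (1 : Matrix (Fin W) (Fin W) ℝ) - Dj := by
    rw [hrec, sub_sub_cancel]
  have hvnorm : euclNorm vprev = 1 := by
    rw [hvprev, euclNorm_smul, abs_of_pos (inv_pos.mpr hnpos), ← hn,
      inv_mul_cancel₀ hnpos.ne']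
  have hMv : (Bprevᵀ * Dprev⁻¹ * Bprev).mulVec vprev
      = Aj.mulVec vprev - E • vprev - n⁻¹ • Bj.mulVec u := by
    rw [hM, sub_mulVec, sub_mulVec, smul_mulVec, one_mulVec]
    congr 1
    rw [hvprev, mulVec_smul, hDjy]
  rw [hMv]
  have hBju : euclNorm (Bj.mulVec u) ≤ 10 := by simpa [hu] using hBop u
  have h1 : euclNorm (Aj.mulVec vprev) ≤ 10 := by simpa [hvnorm] using hAop vprev
  have h2 : euclNorm (E • vprev) = |E| := by rw [euclNorm_smul, hvnorm, mul_one]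
  have h3 : euclNorm (n⁻¹ • Bj.mulVec u) ≤ 1 := by
    rw [euclNorm_smul, abs_of_pos (inv_pos.mpr hnpos)]
    have hinv : n⁻¹ ≤ 10⁻¹ := by
      apply inv_anti₀ (by norm_num) h10
    calc n⁻¹ * euclNorm (Bj.mulVec u) ≤ 10⁻¹ * 10 := by
          apply mul_le_mul hinv hBju (euclNorm_nonneg _) (by norm_num)
      _ = 1 := by norm_num
  calc euclNorm _ ≤ euclNorm (Aj.mulVec vprev) + euclNorm (E • vprev)
        + euclNorm (n⁻¹ • Bj.mulVec u) := euclNorm_sub_sub _ _ _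
    _ ≤ 100 + |E| := by rw [h2]; linarith
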